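/- Let P : ℂ → ℂ be a monic polynomial of degree D ≥ 2, with filled Julia set K_P and Green's function G. Fix z₀ ∈ K_P, and for each s > 0 let V_s denote the connected component of the open set {z ∈ ℂ : G(z) < s} containing z₀. Then the family {V_s}_{s>0} is properly nested: the closure of V_s is contained in V_{s'} whenever 0 < s < s', and the intersection ⋂_{s>0} V_s equals the connected component of K_P containing z₀. -/

import Mathlib

open Filter Topology Set

noncomputable def Complex.abs : AbsoluteValue ℂ ℝ where
  toFun z := ‖z‖
  map_mul' := norm_mul
  nonneg' := norm_nonneg
  eq_zero' _ := norm_eq_zero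
  add_le' := norm_add_le

lemma Complex.norm_eq_abs (z : ℂ) : ‖z‖ = Complex.abs z := rfl

lemma Complex.continuous_abs : Continuous Complex.abs := continuous_norm

noncomputable def ell (x : ℝ) : ℝ := Real.log (max x 1)

lemma ell_nonneg (x : ℝ) : 0 ≤ ell x := Real.log_nonneg (le_max_right _ _)

lemma ell_eq_max {x : ℝ} (hx : 0 ≤ x) : max (Real.log x) 0 = ell x := by
  rcases le_or_gt x 1 with h | h
  · rw [ell, max_eq_right h, Real.log_one, max_eq_right (Real.log_nonpos hx h)]
  · rw [ell, max_eq_left h.le, max_eq_left (Real.log_nonneg h.le)]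

lemma ell_mono : Monotone ell := fun a b h =>
  Real.log_le_log (by positivity) (max_le_max h le_rfl)

lemma ell_eq_log {x : ℝ} (hx : 1 ≤ x) : ell x = Real.log x := by
  rw [ell, max_eq_left hx]

lemma ell_pow {x : ℝ} (hx : 0 ≤ x) (n : ℕ) : ell (x ^ n) = n * ell x := by
  rcases le_or_gt x 1 with h | h
  · rw [ell, ell, max_eq_right h, max_eq_right (pow_le_one₀ hx h), Real.log_one, mul_zero]
  · rw [ell_eq_log (one_le_pow₀ h.le), ell_eq_log h.le, Real.log_pow]

lemma ell_mul_le {x y : ℝ} (hy : 0 ≤ y) : ell (x * y) ≤ ell x + ell y := by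
  have h1 : (1:ℝ) ≤ max x 1 := le_max_right _ _
  have h2 : (1:ℝ) ≤ max y 1 := le_max_right _ _
  have : max (x * y) 1 ≤ max x 1 * max y 1 := by
    apply max_le
    · exact mul_le_mul (le_max_left _ _) (le_max_left _ _) hy (le_trans zero_le_one h1)
    · exact one_le_mul_of_one_le_of_one_le h1 h2
  calc ell (x * y) ≤ Real.log (max x 1 * max y 1) := Real.log_le_log (by positivity) this
    _ = ell x + ell y := Real.log_mul (by positivity) (by positivity)

lemma continuous_ell : Continuous ell := by
  apply Real.continuousOn_log.comp_continuous (continuous_id.max continuous_const)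
  intro x
  simp only [mem_compl_iff, mem_singleton_iff]
  have : (1:ℝ) ≤ max x 1 := le_max_right _ _
  intro h; rw [id_eq] at h; rw [h] at this; norm_num at this

lemma eval_abs_le (Q : Polynomial ℂ) (w : ℂ) :
    Complex.abs (Q.eval w) ≤
      (∑ i ∈ Finset.range (Q.natDegree + 1), Complex.abs (Q.coeff i)) *
        max (Complex.abs w) 1 ^ Q.natDegree := by
  rw [Polynomial.eval_eq_sum_range]
  calc Complex.abs (∑ i ∈ Finset.range (Q.natDegree + 1), Q.coeff i * w ^ i)
      ≤ ∑ i ∈ Finset.range (Q.natDegree + 1), Complex.abs (Q.coeff i * w ^ i) :=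
        Complex.abs.sum_le _ _
    _ ≤ ∑ i ∈ Finset.range (Q.natDegree + 1),
          Complex.abs (Q.coeff i) * max (Complex.abs w) 1 ^ Q.natDegree := by
        apply Finset.sum_le_sum
        intro i hi
        rw [map_mul, map_pow]
        apply mul_le_mul_of_nonneg_left _ (Complex.abs.nonneg _)
        calc Complex.abs w ^ i ≤ max (Complex.abs w) 1 ^ i :=
              pow_le_pow_left₀ (Complex.abs.nonneg w) (le_max_left _ _) i
          _ ≤ max (Complex.abs w) 1 ^ Q.natDegree :=
              pow_le_pow_right₀ (le_max_right _ _) (Nat.lt_succ_iff.mp (Finset.mem_range.mp hi))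
    _ = _ := by rw [← Finset.sum_mul]

lemma poly_lower (D : ℕ) (hD : 2 ≤ D) (P : Polynomial ℂ) (hmonic : P.Monic)
    (hdeg : P.natDegree = D) :
    ∃ R : ℝ, 4 ≤ R ∧ ∀ w : ℂ, R ≤ Complex.abs w →
      Complex.abs w ^ D / 2 ≤ Complex.abs (P.eval w) := by
  set Q : Polynomial ℂ := P - Polynomial.X ^ D with hQ
  set B : ℝ := ∑ i ∈ Finset.range (Q.natDegree + 1), Complex.abs (Q.coeff i) with hB
  have hBnn : 0 ≤ B := Finset.sum_nonneg fun i _ => Complex.abs.nonneg _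
  have hQdeg : Q.natDegree < D := by
    rcases eq_or_ne Q 0 with h | h
    · rw [h]; simpa using hD.trans_lt' (by norm_num)
    · have hdlt : Q.degree < P.degree := by
        apply Polynomial.degree_sub_lt
        · rw [Polynomial.degree_X_pow, Polynomial.degree_eq_natDegree hmonic.ne_zero, hdeg]
        · exact hmonic.ne_zero
        · simp [hmonic.leadingCoeff, Polynomial.leadingCoeff_X_pow]
      rw [Polynomial.degree_eq_natDegree hmonic.ne_zero, hdeg] at hdlt
      exact (Polynomial.natDegree_lt_iff_degree_lt h).mpr hdlt
  refine ⟨max 4 (2 * B + 2), le_max_left _ _, fun w hw => ?_⟩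
  have h4 : (4:ℝ) ≤ Complex.abs w := le_trans (le_max_left _ _) hw
  have h1 : (1:ℝ) ≤ Complex.abs w := by linarith
  have hmax : max (Complex.abs w) 1 = Complex.abs w := max_eq_left h1
  have hQb : Complex.abs (Q.eval w) ≤ B * Complex.abs w ^ (D - 1) := by
    calc Complex.abs (Q.eval w) ≤ B * max (Complex.abs w) 1 ^ Q.natDegree := eval_abs_le Q w
      _ ≤ B * Complex.abs w ^ (D - 1) := by
          rw [hmax]
          exact mul_le_mul_of_nonneg_left
            (pow_le_pow_right₀ h1 (Nat.le_sub_one_of_lt hQdeg)) hBnn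
  have hPeval : Complex.abs (P.eval w) ≥ Complex.abs w ^ D - Complex.abs (Q.eval w) := by
    have : P.eval w = w ^ D + Q.eval w := by
      simp [hQ, Polynomial.eval_sub, Polynomial.eval_pow]
    rw [this]
    calc Complex.abs w ^ D - Complex.abs (Q.eval w)
        = Complex.abs (w ^ D) - Complex.abs (Q.eval w) := by rw [map_pow]
      _ ≤ Complex.abs (w ^ D + Q.eval w) := by
          have h := Complex.abs.add_le (w ^ D + Q.eval w) (-(Q.eval w))
          simp only [add_neg_cancel_right] at h
          rw [Complex.abs.map_neg] at h
          linarith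
  have hD1 : D - 1 + 1 = D := by omega
  have hwB : 2 * B ≤ Complex.abs w := by
    have := le_trans (le_max_right _ _) hw; linarith
  have key : B * Complex.abs w ^ (D - 1) ≤ Complex.abs w ^ D / 2 := by
    have hpow : (0:ℝ) < Complex.abs w ^ (D - 1) := pow_pos (by linarith) _
    have : Complex.abs w ^ D = Complex.abs w ^ (D - 1) * Complex.abs w := by
      rw [← pow_succ, hD1]
    rw [this]
    nlinarith
  linarith


lemma log_bound (D : ℕ) (hD : 2 ≤ D) (P : Polynomial ℂ) (hmonic : P.Monic)
    (hdeg : P.natDegree = D)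
    (R : ℝ) (hR4 : 4 ≤ R)
    (hlow : ∀ w : ℂ, R ≤ Complex.abs w → Complex.abs w ^ D / 2 ≤ Complex.abs (P.eval w)) :
    ∃ C : ℝ, 0 ≤ C ∧
      (∀ w : ℂ, |ell (Complex.abs (P.eval w)) - D * ell (Complex.abs w)| ≤ C) ∧
      (∀ w : ℂ, R ≤ Complex.abs w →
        D * ell (Complex.abs w) - Real.log 2 ≤ ell (Complex.abs (P.eval w))) := by
  set A : ℝ := ∑ i ∈ Finset.range (D + 1), Complex.abs (P.coeff i) with hA
  have hA1 : 1 ≤ A := by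
    have hmem : D ∈ Finset.range (D + 1) := Finset.self_mem_range_succ D
    have hco : Complex.abs (P.coeff D) = 1 := by
      rw [← hdeg, ← Polynomial.leadingCoeff, hmonic.leadingCoeff, map_one]
    calc (1:ℝ) = Complex.abs (P.coeff D) := hco.symm
      _ ≤ A := Finset.single_le_sum (fun i _ => Complex.abs.nonneg _) hmem
  -- lower estimate on the escape region
  have hlower : ∀ w : ℂ, R ≤ Complex.abs w →
      D * ell (Complex.abs w) - Real.log 2 ≤ ell (Complex.abs (P.eval w)) := by
    intro w hw
    have h1 : (1:ℝ) ≤ Complex.abs w := by linarith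
    have hp2 : (2:ℝ) ≤ Complex.abs w ^ D / 2 := by
      have h1' : (4:ℝ) ≤ Complex.abs w := by linarith
      have : (4:ℝ) ^ D ≤ Complex.abs w ^ D := pow_le_pow_left₀ (by norm_num) h1' D
      have h42 : (16:ℝ) ≤ (4:ℝ) ^ D := by
        calc (16:ℝ) = 4 ^ 2 := by norm_num
          _ ≤ 4 ^ D := pow_le_pow_right₀ (by norm_num) hD
      linarith
    have := hlow w hw
    calc D * ell (Complex.abs w) - Real.log 2
        = Real.log (Complex.abs w ^ D / 2) := by
          rw [Real.log_div (by positivity) (by norm_num), Real.log_pow,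
            ell_eq_log h1]
      _ = ell (Complex.abs w ^ D / 2) := (ell_eq_log (by linarith)).symm
      _ ≤ ell (Complex.abs (P.eval w)) := ell_mono this
  -- upper estimate everywhere
  have hupper : ∀ w : ℂ, ell (Complex.abs (P.eval w)) ≤ Real.log A + D * ell (Complex.abs w) := by
    intro w
    have heval : Complex.abs (P.eval w) ≤ A * max (Complex.abs w) 1 ^ D := by
      have := eval_abs_le P w
      rwa [hdeg] at this
    have hmm : ell (max (Complex.abs w) 1) = ell (Complex.abs w) := by
      rw [ell, ell, max_assoc, max_self]
    calc ell (Complex.abs (P.eval w)) ≤ ell (A * max (Complex.abs w) 1 ^ D) :=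
          ell_mono heval
      _ ≤ ell A + ell (max (Complex.abs w) 1 ^ D) := ell_mul_le (by positivity)
      _ = Real.log A + D * ell (Complex.abs w) := by
          rw [ell_eq_log hA1, ell_pow (by positivity), hmm]
  refine ⟨Real.log A + (D * Real.log R + Real.log 2), by
      have := Real.log_nonneg hA1
      have := Real.log_nonneg (by linarith : (1:ℝ) ≤ R)
      have := Real.log_nonneg (by norm_num : (1:ℝ) ≤ 2)
      positivity, fun w => ?_, hlower⟩
  rw [abs_le]
  constructor
  · -- lower side :  -(C) ≤ ell|Pw| - D ell|w|
    rcases le_or_gt R (Complex.abs w) with hw | hw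
    · have := hlower w hw
      have hlogA := Real.log_nonneg hA1
      have hlogR := Real.log_nonneg (by linarith : (1:ℝ) ≤ R)
      have hD0 : (0:ℝ) ≤ D := by positivity
      nlinarith
    · have h1 : ell (Complex.abs w) ≤ Real.log R := by
        rw [← ell_eq_log (by linarith : (1:ℝ) ≤ R)]
        exact ell_mono hw.le
      have h2 := ell_nonneg (Complex.abs (P.eval w))
      have h3 := ell_nonneg (Complex.abs w)
      have hlogA := Real.log_nonneg hA1
      have hlog2 := Real.log_nonneg (by norm_num : (1:ℝ) ≤ 2)
      have hD0 : (0:ℝ) ≤ D := by positivity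
      nlinarith
  · have := hupper w
    have hlogR := Real.log_nonneg (by linarith : (1:ℝ) ≤ R)
    have hlog2 := Real.log_nonneg (by norm_num : (1:ℝ) ≤ 2)
    have hD0 : (0:ℝ) ≤ D := by positivity
    nlinarith

lemma green_facts (D : ℕ) (hD : 2 ≤ D) (P : Polynomial ℂ) (G : ℂ → ℝ)
    (C R : ℝ) (hC0 : 0 ≤ C) (hR4 : 4 ≤ R)
    (hG : ∀ z : ℂ, Tendsto (fun n : ℕ =>
        (1 / (D : ℝ) ^ n) *
          max (Real.log (Complex.abs ((fun w => P.eval w)^[n] z))) 0)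
      atTop (𝓝 (G z)))
    (hlow : ∀ w : ℂ, R ≤ Complex.abs w → Complex.abs w ^ D / 2 ≤ Complex.abs (P.eval w))
    (hbd : ∀ w : ℂ, |ell (Complex.abs (P.eval w)) - D * ell (Complex.abs w)| ≤ C)
    (hbd2 : ∀ w : ℂ, R ≤ Complex.abs w →
        D * ell (Complex.abs w) - Real.log 2 ≤ ell (Complex.abs (P.eval w))) :
    Continuous G ∧
    (∀ z, Bornology.IsBounded (Set.range fun n : ℕ => (fun w => P.eval w)^[n] z) → G z = 0) ∧
    (∀ z, ¬ Bornology.IsBounded (Set.range fun n : ℕ => (fun w => P.eval w)^[n] z) → 0 < G z) ∧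
    (∀ s : ℝ, Bornology.IsBounded {z : ℂ | G z < s}) := by
  have hD2 : (2:ℝ) ≤ (D:ℝ) := by exact_mod_cast hD
  have hD0 : (0:ℝ) < D := by linarith
  set f : ℂ → ℂ := fun w => P.eval w with hf
  set g : ℕ → ℂ → ℝ := fun n z => (1 / (D : ℝ) ^ n) * ell (Complex.abs (f^[n] z)) with hg
  have hpow : ∀ n : ℕ, (0:ℝ) < (D:ℝ) ^ n := fun n => pow_pos hD0 n
  have hlog2 : (0:ℝ) ≤ Real.log 2 := Real.log_nonneg one_le_two
  have hG' : ∀ z, Tendsto (fun n => g n z) atTop (𝓝 (G z)) := by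
    intro z
    have heq : (fun n : ℕ => (1 / (D : ℝ) ^ n) *
        max (Real.log (Complex.abs (f^[n] z))) 0) = fun n => g n z := by
      funext n; rw [ell_eq_max (Complex.abs.nonneg _)]
    rw [← heq]; exact hG z
  have hgnonneg : ∀ n z, 0 ≤ g n z := fun n z =>
    mul_nonneg (by positivity) (ell_nonneg _)
  -- step estimate
  have hstep : ∀ n (z : ℂ), |g (n+1) z - g n z| ≤ C / D ^ (n+1) := by
    intro n z
    have hit : f^[n+1] z = f (f^[n] z) := Function.iterate_succ_apply' f n z
    have heq : g (n+1) z - g n z =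
        (1 / (D:ℝ) ^ (n+1)) *
          (ell (Complex.abs (f (f^[n] z))) - D * ell (Complex.abs (f^[n] z))) := by
      rw [hg]; simp only [hit]
      have h1 := hpow n
      have h2 := hpow (n+1)
      field_simp
      ring
    rw [heq, abs_mul, abs_of_pos (by positivity : (0:ℝ) < 1 / (D:ℝ) ^ (n+1)),
      div_eq_mul_inv C, mul_comm C, ← one_div]
    exact mul_le_mul_of_nonneg_left (hbd _) (by positivity)
  -- Cauchy estimate
  have hcauchy : ∀ n m (z : ℂ), |g (n+m) z - g n z| ≤ C / D ^ n - C / D ^ (n+m) := by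
    intro n m z
    induction m with
    | zero => simp
    | succ m ih =>
      have h1 := hstep (n+m) z
      have habs := abs_sub_le (g (n+m+1) z) (g (n+m) z) (g n z)
      have hp1 := hpow (n+m)
      have hp2 := hpow (n+m+1)
      have hpows : (D:ℝ) ^ (n+(m+1)) = (D:ℝ) ^ (n+m) * D := by rw [← pow_succ]; ring_nf
      have key : C / D ^ (n+m+1) + C / D ^ (n+m+1) ≤ C / D ^ (n+m) := by
        rw [← add_div, div_le_div_iff₀ hp2 hp1]
        have : (D:ℝ) ^ (n+m+1) = (D:ℝ) ^ (n+m) * D := by ring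
        rw [this]
        nlinarith [mul_nonneg hC0 hp1.le]
      have hee : (n+(m+1)) = (n+m+1) := by ring
      rw [hee] at *
      have : (D:ℝ) ^ (n + m + 1) = (D:ℝ)^(n+m) * D := by ring
      show |g (n+m+1) z - g n z| ≤ C / D ^ n - C / D ^ (n+m+1)
      linarith
  -- uniform approximation
  have hGapprox : ∀ n (z : ℂ), |G z - g n z| ≤ C / D ^ n := by
    intro n z
    have h1 : Tendsto (fun m => g (n + m) z) atTop (𝓝 (G z)) := by
      have := (hG' z).comp (tendsto_add_atTop_nat n)
      simpa [Function.comp_def, add_comm] using this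
    have h2 : Tendsto (fun m => |g (n + m) z - g n z|) atTop (𝓝 (|G z - g n z|)) :=
      (h1.sub tendsto_const_nhds).abs
    apply le_of_tendsto h2
    filter_upwards with m
    have := hcauchy n m z
    have hnm := (hpow (n+m))
    have : C / (D:ℝ) ^ (n+m) ≥ 0 := by positivity
    linarith [hcauchy n m z]
  -- continuity of each g n
  have hgcont : ∀ n, Continuous (g n) := by
    intro n
    apply Continuous.mul continuous_const
    exact continuous_ell.comp (Complex.continuous_abs.comp
      ((P.continuous : Continuous f).iterate n))
  -- geometric decay
  have hgeo : ∀ c : ℝ, Tendsto (fun n : ℕ => c / (D:ℝ) ^ n) atTop (𝓝 0) := by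
    intro c
    have h1 : Tendsto (fun n : ℕ => ((1:ℝ)/D) ^ n) atTop (𝓝 0) :=
      tendsto_pow_atTop_nhds_zero_of_lt_one (by positivity)
        (by rw [div_lt_one hD0]; linarith)
    have := h1.const_mul c
    rw [mul_zero] at this
    convert this using 2 with n
    rw [one_div, inv_pow, div_eq_mul_inv]
  have hGcont : Continuous G := by
    have hunif : TendstoUniformly g G atTop := by
      rw [Metric.tendstoUniformly_iff]
      intro ε hε
      filter_upwards [(hgeo C).eventually (gt_mem_nhds hε)] with n hn z
      rw [Real.dist_eq]
      exact lt_of_le_of_lt (hGapprox n z) hn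
    exact hunif.continuous (Frequently.of_forall hgcont)
  -- bounded orbit → G = 0
  have hGzero : ∀ z, Bornology.IsBounded (Set.range fun n : ℕ => f^[n] z) → G z = 0 := by
    intro z hzb
    obtain ⟨Bd, hBd⟩ := isBounded_iff_forall_norm_le.mp hzb
    have hb : ∀ n, g n z ≤ ell Bd / (D:ℝ) ^ n := by
      intro n
      rw [hg]
      have h1 : Complex.abs (f^[n] z) ≤ Bd := by
        have := hBd _ (mem_range_self n)
        rwa [Complex.norm_eq_abs] at this
      calc (1 / (D : ℝ) ^ n) * ell (Complex.abs (f^[n] z))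
          ≤ (1 / (D : ℝ) ^ n) * ell Bd :=
            mul_le_mul_of_nonneg_left (ell_mono h1) (by positivity)
        _ = ell Bd / (D:ℝ) ^ n := by rw [one_div, inv_mul_eq_div]
    have hsq : Tendsto (fun n => g n z) atTop (𝓝 0) :=
      tendsto_of_tendsto_of_tendsto_of_le_of_le tendsto_const_nhds (hgeo (ell Bd))
        (fun n => hgnonneg n z) hb
    exact tendsto_nhds_unique (hG' z) hsq
  -- growth claim
  have hgrow : ∀ w : ℂ, R ≤ Complex.abs w → ∀ k : ℕ,
      R ≤ Complex.abs (f^[k] w) ∧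
      (D:ℝ)^k * (ell (Complex.abs w) - Real.log 2) ≤ ell (Complex.abs (f^[k] w)) - Real.log 2 := by
    intro w hw k
    induction k with
    | zero => simpa using hw
    | succ k ih =>
      obtain ⟨ihR, ihE⟩ := ih
      have hit : f^[k+1] w = f (f^[k] w) := Function.iterate_succ_apply' f k w
      set u := f^[k] w with hu
      have hu1 : (1:ℝ) ≤ Complex.abs u := by linarith
      have hfu : Complex.abs u ^ D / 2 ≤ Complex.abs (f u) := hlow u ihR
      have h2D : Complex.abs u ^ 2 ≤ Complex.abs u ^ D := pow_le_pow_right₀ hu1 hD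
      constructor
      · rw [hit]
        nlinarith [hfu, ihR, hR4]
      · rw [hit]
        have hb2 := hbd2 u ihR
        have hkey : (D:ℝ) * (ell (Complex.abs u) - Real.log 2) ≤
            ell (Complex.abs (f u)) - Real.log 2 := by nlinarith
        calc (D:ℝ)^(k+1) * (ell (Complex.abs w) - Real.log 2)
            = (D:ℝ) * ((D:ℝ)^k * (ell (Complex.abs w) - Real.log 2)) := by ring
          _ ≤ (D:ℝ) * (ell (Complex.abs u) - Real.log 2) :=
              mul_le_mul_of_nonneg_left ihE (le_of_lt hD0)
          _ ≤ _ := hkey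
  -- G is large for large |z|
  have hGlarge : ∀ z : ℂ, R ≤ Complex.abs z → Real.log (Complex.abs z) - Real.log 2 ≤ G z := by
    intro z hz
    apply ge_of_tendsto (hG' z)
    filter_upwards with n
    obtain ⟨_, hE⟩ := hgrow z hz n
    rw [← ell_eq_log (by linarith : (1:ℝ) ≤ Complex.abs z)]
    show ell (Complex.abs z) - Real.log 2 ≤ (1 / (D : ℝ) ^ n) * ell (Complex.abs (f^[n] z))
    have hpn := hpow n
    have hDn1 : 1 ≤ (D:ℝ)^n := one_le_pow₀ (by linarith)
    rcases le_or_gt (ell (Complex.abs z) - Real.log 2) 0 with hneg | hpos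
    · have := hgnonneg n z
      rw [hg] at this; exact le_trans hneg this
    · have h1 : (D:ℝ)^n * (ell (Complex.abs z) - Real.log 2) ≤ ell (Complex.abs (f^[n] z)) := by
        nlinarith [ell_nonneg (Complex.abs (f^[n] z))]
      rw [div_mul_eq_mul_div, one_mul, le_div_iff₀ hpn]
      nlinarith
  refine ⟨hGcont, hGzero, ?_, ?_⟩
  · -- unbounded orbit → 0 < G z
    intro z hzb
    rw [isBounded_iff_forall_norm_le] at hzb
    push_neg at hzb
    obtain ⟨x, hxmem, hx⟩ := hzb R
    obtain ⟨m, rfl⟩ := hxmem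
    have hRm : R ≤ Complex.abs (f^[m] z) := by
      rw [← Complex.norm_eq_abs]; exact hx.le
    have hellm : Real.log 2 < ell (Complex.abs (f^[m] z)) := by
      have h1 : Real.log 2 < Real.log 4 := Real.log_lt_log (by norm_num) (by norm_num)
      have h2 : Real.log 4 ≤ Real.log R := Real.log_le_log (by norm_num) hR4
      have h3 : Real.log R = ell R := (ell_eq_log (by linarith)).symm
      have h4 : ell R ≤ ell (Complex.abs (f^[m] z)) := ell_mono hRm
      linarith
    set ε := (1/(D:ℝ)^m) * (ell (Complex.abs (f^[m] z)) - Real.log 2) with hε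
    have hεpos : 0 < ε := by
      apply mul_pos (by positivity); linarith
    refine lt_of_lt_of_le hεpos (ge_of_tendsto (hG' z) ?_)
    filter_upwards [eventually_ge_atTop m] with n hn
    obtain ⟨k, rfl⟩ : ∃ k, n = k + m := ⟨n - m, (Nat.sub_add_cancel hn).symm⟩
    have hit : f^[k+m] z = f^[k] (f^[m] z) := Function.iterate_add_apply f k m z
    obtain ⟨_, hE⟩ := hgrow _ hRm k
    show ε ≤ (1 / (D : ℝ) ^ (k+m)) * ell (Complex.abs (f^[k+m] z))
    rw [hit]
    have hpk := hpow k
    have hpm := hpow m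
    have hpkm : (D:ℝ)^(k+m) = (D:ℝ)^k * (D:ℝ)^m := pow_add _ _ _
    have h1 : (D:ℝ)^k * (ell (Complex.abs (f^[m] z)) - Real.log 2) ≤
        ell (Complex.abs (f^[k] (f^[m] z))) := by nlinarith
    rw [hε, div_mul_eq_mul_div, one_mul, div_mul_eq_mul_div, one_mul,
      div_le_div_iff₀ hpm (by positivity)]
    calc (ell (Complex.abs (f^[m] z)) - Real.log 2) * (D:ℝ)^(k+m)
        = ((D:ℝ)^k * (ell (Complex.abs (f^[m] z)) - Real.log 2)) * (D:ℝ)^m := by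
          rw [hpkm]; ring
      _ ≤ ell (Complex.abs (f^[k] (f^[m] z))) * (D:ℝ)^m :=
          mul_le_mul_of_nonneg_right h1 (le_of_lt hpm)
  · -- sublevel sets bounded
    intro s
    rw [isBounded_iff_forall_norm_le]
    refine ⟨max R (Real.exp (s + Real.log 2)), fun z hz => ?_⟩
    by_contra h
    push_neg at h
    have hzR : R ≤ Complex.abs z := by
      rw [← Complex.norm_eq_abs]
      exact le_trans (le_max_left _ _) h.le
    have hlarge := hGlarge z hzR
    have hexp : Real.exp (s + Real.log 2) < Complex.abs z := by
      rw [← Complex.norm_eq_abs]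
      exact lt_of_le_of_lt (le_max_right _ _) h
    have hlog : s + Real.log 2 < Real.log (Complex.abs z) := by
      calc s + Real.log 2 = Real.log (Real.exp (s + Real.log 2)) := (Real.log_exp _).symm
        _ < Real.log (Complex.abs z) := Real.log_lt_log (Real.exp_pos _) hexp
    have : s < G z := by linarith
    exact absurd hz (by simp only [mem_setOf_eq]; linarith)

lemma iInter_preconnected (K : ℕ → Set ℂ) (hdec : ∀ n, K (n+1) ⊆ K n)
    (hcpt : ∀ n, IsCompact (K n)) (hconn : ∀ n, IsPreconnected (K n)) :
    IsPreconnected (⋂ n, K n) := by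
  have hclosed : ∀ n, IsClosed (K n) := fun n => (hcpt n).isClosed
  have hTclosed : IsClosed (⋂ n, K n) := isClosed_iInter hclosed
  rw [isPreconnected_iff_subset_of_fully_disjoint_closed hTclosed]
  intro a b ha hb hab hdisj
  obtain ⟨u, v, hu, hv, hau, hbv, huv⟩ := normal_separation (ha.inter (hclosed 0))
    (hb.inter (hclosed 0)) (hdisj.mono inter_subset_left inter_subset_left)
  have hsub : ∃ n, K n ⊆ u ∪ v := by
    by_contra hcon
    push_neg at hcon
    have hne : ∀ n, (K n \ (u ∪ v)).Nonempty := fun n => by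
      obtain ⟨x, hx1, hx2⟩ := not_subset.mp (hcon n)
      exact ⟨x, hx1, hx2⟩
    obtain ⟨x, hx⟩ := IsCompact.nonempty_iInter_of_sequence_nonempty_isCompact_isClosed
      (fun n => K n \ (u ∪ v)) (fun n => diff_subset_diff_left (hdec n)) hne
      ((hcpt 0).diff (hu.union hv)) (fun n => (hclosed n).sdiff (hu.union hv))
    rw [mem_iInter] at hx
    have hxK : x ∈ ⋂ n, K n := mem_iInter.mpr fun n => (hx n).1
    have hxuv : x ∉ u ∪ v := (hx 0).2
    have hx0 : x ∈ K 0 := (hx 0).1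
    rcases hab hxK with h | h
    · exact hxuv (Or.inl (hau ⟨h, hx0⟩))
    · exact hxuv (Or.inr (hbv ⟨h, hx0⟩))
  obtain ⟨n, hn⟩ := hsub
  have hsubK0 : ∀ x ∈ ⋂ i, K i, x ∈ K 0 := fun x hx => mem_iInter.mp hx 0
  rcases (hconn n).subset_or_subset hu hv huv hn with h | h
  · left
    intro x hx
    rcases hab hx with h1 | h1
    · exact h1
    · exfalso
      have hxv : x ∈ v := hbv ⟨h1, hsubK0 x hx⟩
      have hxu : x ∈ u := h (mem_iInter.mp hx n)
      exact (disjoint_left.mp huv hxu) hxv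
  · right
    intro x hx
    rcases hab hx with h1 | h1
    · exfalso
      have hxu : x ∈ u := hau ⟨h1, hsubK0 x hx⟩
      have hxv : x ∈ v := h (mem_iInter.mp hx n)
      exact (disjoint_left.mp huv hxu) hxv
    · exact h1


/-- For `z₀` in the filled Julia set, the components `V_s` of `{G < s}`
containing `z₀` are properly nested, and their intersection is the connected component
of the filled Julia set containing `z₀`. -/
theorem nested_sublevel_components (D : ℕ) (hD : 2 ≤ D)
    (P : Polynomial ℂ) (hmonic : P.Monic) (hdeg : P.natDegree = D) (G : ℂ → ℝ)
    (hG : ∀ z : ℂ, Tendsto (fun n : ℕ =>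
        (1 / (D : ℝ) ^ n) *
          max (Real.log ‖(fun w => P.eval w)^[n] z‖) 0)
      atTop (𝓝 (G z)))
    (z₀ : ℂ)
    (hz₀ : Bornology.IsBounded (Set.range fun n : ℕ => (fun w => P.eval w)^[n] z₀)) :
    (∀ s s' : ℝ, 0 < s → s < s' →
      closure (connectedComponentIn {z : ℂ | G z < s} z₀) ⊆
        connectedComponentIn {z : ℂ | G z < s'} z₀) ∧
    (⋂ s ∈ Set.Ioi (0 : ℝ), connectedComponentIn {z : ℂ | G z < s} z₀) =
      connectedComponentIn
        {z : ℂ | Bornology.IsBounded (Set.range fun n : ℕ => (fun w => P.eval w)^[n] z)}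
        z₀ := by
  obtain ⟨R, hR4, hlow⟩ := poly_lower D hD P hmonic hdeg
  obtain ⟨C, hC0, hbd, hbd2⟩ := log_bound D hD P hmonic hdeg R hR4 hlow
  obtain ⟨hGcont, hGzero, hGpos, hGbdd⟩ :=
    green_facts D hD P G C R hC0 hR4 hG hlow hbd hbd2
  have hz₀G : G z₀ = 0 := hGzero z₀ hz₀
  have hcl : ∀ s : ℝ, closure {z : ℂ | G z < s} ⊆ {z : ℂ | G z ≤ s} := fun s =>
    closure_minimal (fun z hz => show G z ≤ s from le_of_lt hz) (isClosed_le hGcont continuous_const)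
  have part1 : ∀ s s' : ℝ, 0 < s → s < s' →
      closure (connectedComponentIn {z : ℂ | G z < s} z₀) ⊆
        connectedComponentIn {z : ℂ | G z < s'} z₀ := by
    intro s s' hs hss'
    have hmem : z₀ ∈ {z : ℂ | G z < s} := by simp [hz₀G, hs]
    have hclconn : IsPreconnected (closure (connectedComponentIn {z : ℂ | G z < s} z₀)) :=
      (isPreconnected_connectedComponentIn).closure
    have hz₀cl : z₀ ∈ closure (connectedComponentIn {z : ℂ | G z < s} z₀) :=
      subset_closure (mem_connectedComponentIn hmem)
    have hclsub : closure (connectedComponentIn {z : ℂ | G z < s} z₀) ⊆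
        {z : ℂ | G z < s'} := by
      intro x hx
      have h1 : x ∈ closure {z : ℂ | G z < s} :=
        closure_mono (connectedComponentIn_subset _ _) hx
      exact lt_of_le_of_lt (hcl s h1) hss'
    exact hclconn.subset_connectedComponentIn hz₀cl hclsub
  refine ⟨part1, ?_⟩
  set KP : Set ℂ :=
    {z : ℂ | Bornology.IsBounded (Set.range fun n : ℕ => (fun w => P.eval w)^[n] z)} with hKP
  set V : ℝ → Set ℂ := fun s => connectedComponentIn {z : ℂ | G z < s} z₀ with hV
  set K : ℕ → Set ℂ := fun n => closure (V (1/((n:ℝ)+1))) with hK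
  have hVsub : ∀ s : ℝ, V s ⊆ {z : ℂ | G z < s} := fun s => connectedComponentIn_subset _ _
  have hVmono : ∀ s t : ℝ, s ≤ t → V s ⊆ V t := fun s t h =>
    connectedComponentIn_mono _ (fun z hz => lt_of_lt_of_le hz h)
  have hmemV : ∀ s : ℝ, 0 < s → z₀ ∈ V s := fun s hs =>
    mem_connectedComponentIn (by simp [hz₀G, hs])
  have hposn : ∀ n : ℕ, (0:ℝ) < 1/((n:ℝ)+1) := fun n => by positivity
  have hKdec : ∀ n, K (n+1) ⊆ K n := by
    intro n
    apply closure_mono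
    apply hVmono
    rw [div_le_div_iff₀ (by positivity) (by positivity)]
    push_cast
    nlinarith [Nat.cast_nonneg (α := ℝ) n]
  have hKcpt : ∀ n, IsCompact (K n) := fun n =>
    Metric.isCompact_of_isClosed_isBounded isClosed_closure
      (((hGbdd _).subset (hVsub _)).closure)
  have hKconn : ∀ n, IsPreconnected (K n) := fun n =>
    (isPreconnected_connectedComponentIn).closure
  have hz₀K : ∀ n, z₀ ∈ K n := fun n => subset_closure (hmemV _ (hposn n))
  have hTeq : (⋂ s ∈ Set.Ioi (0:ℝ), V s) = ⋂ n, K n := by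
    apply Subset.antisymm
    · intro z hz
      apply mem_iInter.mpr; intro n
      exact subset_closure (mem_iInter₂.mp hz _ (hposn n))
    · intro z hz
      apply mem_iInter₂.mpr; intro s hs
      obtain ⟨n, hn⟩ := exists_nat_one_div_lt (show (0:ℝ) < s from hs)
      have hn' : (1:ℝ)/((n:ℝ)+1) < s := by exact_mod_cast hn
      exact part1 _ s (hposn n) hn' (mem_iInter.mp hz n)
  rw [hTeq]
  have hTsubKP : (⋂ n, K n) ⊆ KP := by
    intro z hz
    by_contra hzK
    have hpos := hGpos z hzK
    have hle : ∀ n : ℕ, G z ≤ 1/((n:ℝ)+1) := by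
      intro n
      have h1 : z ∈ closure {w : ℂ | G w < 1/((n:ℝ)+1)} :=
        closure_mono (hVsub _) (mem_iInter.mp hz n)
      exact hcl _ h1
    have : G z ≤ 0 :=
      ge_of_tendsto tendsto_one_div_add_atTop_nhds_zero_nat (Eventually.of_forall hle)
    linarith
  have hTpre : IsPreconnected (⋂ n, K n) := iInter_preconnected K hKdec hKcpt hKconn
  have hz₀T : z₀ ∈ ⋂ n, K n := mem_iInter.mpr hz₀K
  apply Subset.antisymm
  · exact hTpre.subset_connectedComponentIn hz₀T hTsubKP
  · intro z hz
    apply mem_iInter.mpr; intro n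
    apply subset_closure
    have hcomp : connectedComponentIn KP z₀ ⊆ V (1/((n:ℝ)+1)) := by
      refine IsPreconnected.subset_connectedComponentIn isPreconnected_connectedComponentIn
        (mem_connectedComponentIn (show z₀ ∈ KP from hz₀)) ?_
      intro w hw
      have hwKP : w ∈ KP := connectedComponentIn_subset _ _ hw
      have hw0 : G w = 0 := hGzero w hwKP
      simp only [mem_setOf_eq, hw0]
      exact hposn n
    exact hcomp hz
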